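/- arXiv:2411.17031 — 5 statements merged into one kernel-verified Lean document; each statement's English description precedes it below -/
import Mathlib

section
/- Let g be a Lie superalgebra equipped with an action of sl₂ by even derivations, and suppose g decomposes as an sl₂-module as g = sl₂ ⊗ J ⊕ V ⊗ M ⊕ D, where V is the natural 2-dimensional sl₂-representation and J, M, D carry trivial sl₂-action (g is 'short'). Define on J the product 2 a·b := [a, f b] (identifying J with the h-eigenspace of eigenvalue 2 via a ↦ e⊗a, where e, f, h are the standard sl₂-generators acting on g). Then (J, ·) is a Jordan superalgebra. -/
/-- The Koszul sign `(-1)^{ij}` for parities `i j : ZMod 2`. -/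
noncomputable def sg (i j : ZMod 2) : ℂ := (-1 : ℂ) ^ (i.val * j.val)




lemma neg_one_pow_mod (n : ℕ) : ((-1:ℂ))^n = (-1)^(n % 2) := by
  conv_lhs => rw [← Nat.div_add_mod n 2]
  rw [pow_add, pow_mul]
  norm_num

lemma sg_sq (i j : ZMod 2) : sg i j * sg i j = 1 := by
  unfold sg; rw [← pow_add]
  exact (Even.add_self _).neg_one_pow

lemma sg_comm (i j : ZMod 2) : sg i j = sg j i := by
  unfold sg; rw [Nat.mul_comm]

lemma sg_addl (i j k : ZMod 2) : sg (i+j) k = sg i k * sg j k := by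
  have key : ∀ i j k : ZMod 2, ((i+j).val * k.val) % 2 = (i.val*k.val + j.val*k.val) % 2 := by decide
  unfold sg
  rw [neg_one_pow_mod, key, ← neg_one_pow_mod, pow_add]

lemma sg_addr (i j k : ZMod 2) : sg i (j+k) = sg i j * sg i k := by
  rw [sg_comm, sg_addl, sg_comm j i, sg_comm k i]


/-- A short `sl₂`-Lie superalgebra: a Z/2-graded complex Lie superalgebra `(G, B)`
together with operators `E F H` satisfying the `sl₂` relations, acting by even
derivations, such that `G` is spanned by `H`-eigenvectors with eigenvalues in
`{-2,-1,0,1,2}` (which, over `ℂ`, is exactly the condition that `G` decomposes as an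
`sl₂`-module into copies of the adjoint, the natural and the trivial representations,
i.e. `G ≅ sl₂⊗J ⊕ V⊗M ⊕ D`). -/
structure ShortSL2 {G : Type} [AddCommGroup G] [Module ℂ G]
    (gr : ZMod 2 → Submodule ℂ G)
    (B : G →ₗ[ℂ] G →ₗ[ℂ] G)
    (E F H : G →ₗ[ℂ] G) : Prop where
  bracket_grade : ∀ i j : ZMod 2, ∀ a ∈ gr i, ∀ b ∈ gr j, B a b ∈ gr (i + j)
  antisymm : ∀ i j : ZMod 2, ∀ a ∈ gr i, ∀ b ∈ gr j, B a b = -(sg i j • B b a)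
  jacobi : ∀ i j : ZMod 2, ∀ a ∈ gr i, ∀ b ∈ gr j, ∀ c : G,
      B a (B b c) = B (B a b) c + sg i j • B b (B a c)
  grade_spans : ∀ x : G, ∃ x0 x1 : G, x0 ∈ gr 0 ∧ x1 ∈ gr 1 ∧ x = x0 + x1
  rel_HE : H ∘ₗ E - E ∘ₗ H = 2 • E
  rel_HF : H ∘ₗ F - F ∘ₗ H = -(2 • F)
  rel_EF : E ∘ₗ F - F ∘ₗ E = H
  derE : ∀ x y : G, E (B x y) = B (E x) y + B x (E y)
  derF : ∀ x y : G, F (B x y) = B (F x) y + B x (F y)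
  derH : ∀ x y : G, H (B x y) = B (H x) y + B x (H y)
  evenE : ∀ i : ZMod 2, ∀ x ∈ gr i, E x ∈ gr i
  evenF : ∀ i : ZMod 2, ∀ x ∈ gr i, F x ∈ gr i
  evenH : ∀ i : ZMod 2, ∀ x ∈ gr i, H x ∈ gr i
  short : ∀ x : G, ∃ x2 x1 x0 y1 y2 : G,
      H x2 = (2 : ℂ) • x2 ∧ H x1 = x1 ∧ H x0 = 0 ∧
      H y1 = (-1 : ℂ) • y1 ∧ H y2 = (-2 : ℂ) • y2 ∧ x = x2 + x1 + x0 + y1 + y2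

/-- The induced product `a·b := ½[a, f·b]` on `J(g) = {a : H a = 2a}`. -/
noncomputable def jmul {G : Type} [AddCommGroup G] [Module ℂ G]
    (B : G →ₗ[ℂ] G →ₗ[ℂ] G) (F : G →ₗ[ℂ] G) (a b : G) : G :=
  (2 : ℂ)⁻¹ • B a (F b)

section Infra
variable {G : Type} [AddCommGroup G] [Module ℂ G] {gr : ZMod 2 → Submodule ℂ G}
  {B : G →ₗ[ℂ] G →ₗ[ℂ] G} {E F H : G →ₗ[ℂ] G}

private lemma phi_eig {v : G} {μ t : ℂ} (hv : H v = μ • v) :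
    (H - t • (LinearMap.id : G →ₗ[ℂ] G)) v = (μ - t) • v ∧
      H ((H - t • (LinearMap.id : G →ₗ[ℂ] G)) v)
        = μ • ((H - t • (LinearMap.id : G →ₗ[ℂ] G)) v) := by
  have e : (H - t • (LinearMap.id : G →ₗ[ℂ] G)) v = H v - t • v := by
    simp
  constructor
  · rw [e, hv, sub_smul]
  · rw [e, map_sub, map_smul, hv, map_smul, hv, smul_sub, smul_comm t μ v]

private lemma quintic (h : ShortSL2 gr B E F H) (v : G) (μ : ℂ) (hv : H v = μ • v)
    (hμ : (μ-2)*(μ-1)*μ*(μ+1)*(μ+2) ≠ 0) : v = 0 := by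
  have hQeig : ∀ (x : G) (ν : ℂ), H x = ν • x →
      ((H - (2:ℂ) • (LinearMap.id : G →ₗ[ℂ] G)) ∘ₗ (H - (1:ℂ) • (LinearMap.id : G →ₗ[ℂ] G))
        ∘ₗ (H - (0:ℂ) • (LinearMap.id : G →ₗ[ℂ] G))
        ∘ₗ (H - (-1:ℂ) • (LinearMap.id : G →ₗ[ℂ] G))
        ∘ₗ (H - (-2:ℂ) • (LinearMap.id : G →ₗ[ℂ] G))) x
        = ((ν-2)*(ν-1)*ν*(ν+1)*(ν+2)) • x := by
    intro x ν hx
    have e1 := phi_eig (t := -2) hx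
    have e2 := phi_eig (t := -1) e1.2
    have e3 := phi_eig (t := 0) e2.2
    have e4 := phi_eig (t := 1) e3.2
    have e5 := phi_eig (t := 2) e4.2
    simp only [LinearMap.comp_apply]
    rw [e5.1, e4.1, e3.1, e2.1, e1.1, smul_smul, smul_smul, smul_smul, smul_smul]
    ring_nf
  obtain ⟨x2, x1, x0, y1, y2, h2, h1, h0, hm1, hm2, hsum⟩ := h.short v
  have hQv := hQeig v μ hv
  have hQv0 : ((H - (2:ℂ) • (LinearMap.id : G →ₗ[ℂ] G)) ∘ₗ (H - (1:ℂ) • (LinearMap.id : G →ₗ[ℂ] G))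
        ∘ₗ (H - (0:ℂ) • (LinearMap.id : G →ₗ[ℂ] G))
        ∘ₗ (H - (-1:ℂ) • (LinearMap.id : G →ₗ[ℂ] G))
        ∘ₗ (H - (-2:ℂ) • (LinearMap.id : G →ₗ[ℂ] G))) v = 0 := by
    rw [hsum, map_add, map_add, map_add, map_add,
        hQeig x2 2 h2, hQeig x1 1 (by rw [h1, one_smul]),
        hQeig x0 0 (by rw [h0, zero_smul]), hQeig y1 (-1) hm1, hQeig y2 (-2) hm2]
    norm_num
  rw [hQv0] at hQv
  rcases smul_eq_zero.mp hQv.symm with hc | hx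
  · exact absurd hc hμ
  · exact hx

/-- eigenvalue ±4 (or ±3) vectors vanish -/
lemma eig4_zero (h : ShortSL2 gr B E F H) {v : G} (hv : H v = (4:ℂ) • v) : v = 0 :=
  quintic h v 4 hv (by norm_num)

lemma eigm4_zero (h : ShortSL2 gr B E F H) {v : G} (hv : H v = (-4:ℂ) • v) : v = 0 :=
  quintic h v (-4) hv (by norm_num)

/-- bundled "element of J with parity p" -/
def IsJ (gr : ZMod 2 → Submodule ℂ G) (H : G →ₗ[ℂ] G) (p : ZMod 2) (u : G) : Prop :=
  u ∈ gr p ∧ H u = (2:ℂ) • u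

lemma hFeig (h : ShortSL2 gr B E F H) {u : G} (hu : H u = (2:ℂ) • u) : H (F u) = 0 := by
  have key := congrArg (fun φ : G →ₗ[ℂ] G => φ u) h.rel_HF
  simp only [LinearMap.sub_apply, LinearMap.comp_apply, LinearMap.neg_apply,
    LinearMap.smul_apply] at key
  have hfu : F (H u) = (2:ℂ) • F u := by rw [hu, map_smul]
  linear_combination (norm := module) key + hfu

lemma hF2eig (h : ShortSL2 gr B E F H) {u : G} (hu : H u = (2:ℂ) • u) :
    H (F (F u)) = (-2:ℂ) • F (F u) := by
  have key := congrArg (fun φ : G →ₗ[ℂ] G => φ (F u)) h.rel_HF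
  simp only [LinearMap.sub_apply, LinearMap.comp_apply, LinearMap.neg_apply,
    LinearMap.smul_apply] at key
  have hfu : F (H (F u)) = 0 := by rw [hFeig h hu, map_zero]
  linear_combination (norm := module) key + hfu

lemma F3 (h : ShortSL2 gr B E F H) {u : G} (hu : H u = (2:ℂ) • u) : F (F (F u)) = 0 := by
  apply eigm4_zero h
  have key := congrArg (fun φ : G →ₗ[ℂ] G => φ (F (F u))) h.rel_HF
  simp only [LinearMap.sub_apply, LinearMap.comp_apply, LinearMap.neg_apply,
    LinearMap.smul_apply] at key
  have hfu : F (H (F (F u))) = (-2:ℂ) • F (F (F u)) := by rw [hF2eig h hu, map_smul]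
  linear_combination (norm := module) key + hfu

lemma IsJ.mul (h : ShortSL2 gr B E F H) {p q : ZMod 2} {u v : G}
    (hu : IsJ gr H p u) (hv : IsJ gr H q v) : IsJ gr H (p+q) (jmul B F u v) := by
  constructor
  · exact Submodule.smul_mem _ _ (h.bracket_grade p q u hu.1 (F v) (h.evenF q v hv.1))
  · show H ((2:ℂ)⁻¹ • B u (F v)) = _
    rw [map_smul, h.derH, hu.2, hFeig h hv.2, map_zero, map_smul, LinearMap.smul_apply]
    rw [add_zero]
    unfold jmul
    module

lemma bzero (h : ShortSL2 gr B E F H) {u v : G}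
    (hu : H u = (2:ℂ) • u) (hv : H v = (2:ℂ) • v) : B u v = 0 := by
  apply eig4_zero h
  rw [h.derH, hu, hv, map_smul, map_smul, LinearMap.smul_apply]
  module

lemma bmul {u v : G} : B u (F v) = (2:ℂ) • jmul B F u v := by
  unfold jmul
  rw [smul_smul]
  norm_num

lemma r3 (h : ShortSL2 gr B E F H) {u v : G}
    (hu : H u = (2:ℂ) • u) (hv : H v = (2:ℂ) • v) :
    B (F u) v = -((2:ℂ) • jmul B F u v) := by
  have hd := h.derF u v
  rw [bzero h hu hv, map_zero] at hd
  have : B (F u) v = -(B u (F v)) := by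
    rw [eq_neg_iff_add_eq_zero, ← hd]
  rw [this, bmul]

lemma jcomm (h : ShortSL2 gr B E F H) {p q : ZMod 2} {u v : G}
    (hu : IsJ gr H p u) (hv : IsJ gr H q v) :
    jmul B F u v = sg p q • jmul B F v u := by
  have h1 : B (F u) v = -(sg p q • B v (F u)) := h.antisymm p q (F u) (h.evenF p u hu.1) v hv.1
  have h2 : B (F u) v = -((2:ℂ) • jmul B F u v) := r3 h hu.2 hv.2
  have h3 : B v (F u) = (2:ℂ) • jmul B F v u := bmul
  rw [h2, h3] at h1
  have h4 : (2:ℂ) • jmul B F u v = (2:ℂ) • (sg p q • jmul B F v u) := by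
    have := neg_injective h1
    rw [this, smul_comm]
  have := smul_right_injective G (two_ne_zero (α := ℂ)) h4
  exact this

lemma r4 (h : ShortSL2 gr B E F H) {u v : G}
    (hu : H u = (2:ℂ) • u) (hv : H v = (2:ℂ) • v) :
    B u (F (F v)) = (2:ℂ) • F (jmul B F u v) - B (F u) (F v) := by
  have hd := h.derF u (F v)
  rw [bmul, map_smul] at hd
  rw [eq_sub_iff_add_eq, hd]
  abel

lemma r5 (h : ShortSL2 gr B E F H) {u v : G}
    (hu : H u = (2:ℂ) • u) (hv : H v = (2:ℂ) • v) :
    B (F (F u)) v = -((2:ℂ) • F (jmul B F u v)) - B (F u) (F v) := by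
  have hd := h.derF (F u) v
  rw [r3 h hu hv, map_neg, map_smul] at hd
  rw [eq_sub_iff_add_eq, ← hd]


lemma jac' (h : ShortSL2 gr B E F H) {i j : ZMod 2} {u v : G}
    (hu : u ∈ gr i) (hv : v ∈ gr j) (z : G) :
    B (B u v) z = B u (B v z) - sg i j • B v (B u z) := by
  rw [h.jacobi i j u hu v hv z]
  abel

lemma r6 (h : ShortSL2 gr B E F H) {p q r : ZMod 2} {u v z : G}
    (hu : IsJ gr H p u) (hv : IsJ gr H q v) (hz : IsJ gr H r z) :
    B (B (F u) (F v)) z = (4:ℂ) • jmul B F u (jmul B F v z)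
      - ((4:ℂ) * sg p q) • jmul B F v (jmul B F u z) := by
  have hmvz := (IsJ.mul h hv hz)
  have hmuz := (IsJ.mul h hu hz)
  rw [jac' h (h.evenF p u hu.1) (h.evenF q v hv.1) z]
  rw [r3 h hv.2 hz.2, r3 h hu.2 hz.2]
  rw [map_neg, map_smul, map_neg, map_smul]
  rw [r3 h hu.2 hmvz.2, r3 h hv.2 hmuz.2]
  module

lemma f2m (h : ShortSL2 gr B E F H) {u v : G}
    (hu : H u = (2:ℂ) • u) (hv : H v = (2:ℂ) • v) :
    F (F (jmul B F u v)) = (2:ℂ)⁻¹ • B (F (F u)) (F v) + B (F u) (F (F v)) := by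
  have e1 : F (B u (F v)) = B (F u) (F v) + B u (F (F v)) := h.derF u (F v)
  have e2 : F (F (B u (F v)))
      = B (F (F u)) (F v) + B (F u) (F (F v)) + (B (F u) (F (F v)) + B u (F (F (F v)))) := by
    rw [e1, map_add, h.derF (F u) (F v), h.derF u (F (F v))]
  rw [F3 h hv] at e2
  have e3 : F (F (B u (F v))) = F (F ((2:ℂ) • jmul B F u v)) := by rw [bmul]
  rw [map_smul, map_smul] at e3
  rw [e3] at e2
  have : (2:ℂ) • F (F (jmul B F u v))
      = (2:ℂ) • ((2:ℂ)⁻¹ • B (F (F u)) (F v) + B (F u) (F (F v))) := by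
    rw [e2]; rw [smul_add, smul_smul]; norm_num; module
  exact smul_right_injective G (two_ne_zero (α := ℂ)) this

lemma w2 (h : ShortSL2 gr B E F H) {p r s : ZMod 2} {u z w : G}
    (hu : IsJ gr H p u) (hz : IsJ gr H r z) (hw : IsJ gr H s w) :
    B (B (F (F u)) z) w = (4:ℂ) • jmul B F (jmul B F u z) w
      - (4:ℂ) • jmul B F u (jmul B F z w)
      + ((4:ℂ) * sg p r) • jmul B F z (jmul B F u w) := by
  have huz := IsJ.mul h hu hz
  rw [r5 h hu.2 hz.2]
  simp only [map_sub, map_neg, map_smul, LinearMap.sub_apply, LinearMap.neg_apply,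
    LinearMap.smul_apply]
  rw [r3 h huz.2 hw.2, r6 h hu hz hw]
  module

lemma a1 (h : ShortSL2 gr B E F H) {px py pz : ZMod 2} {x y z : G}
    (hx : IsJ gr H px x) (hy : IsJ gr H py y) (hz : IsJ gr H pz z) :
    B (B (F (F x)) (F y)) z = (4:ℂ) • F (jmul B F x (jmul B F y z))
      + (2:ℂ) • B (F x) (F (jmul B F y z))
      + ((2:ℂ) * sg px py) • B (F y) (F (jmul B F x z))
      + sg px py • B (F y) (B (F x) (F z)) := by
  have hyz := IsJ.mul h hy hz
  have hxz := IsJ.mul h hx hz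
  rw [jac' h (h.evenF px (F x) (h.evenF px x hx.1)) (h.evenF py y hy.1) z]
  rw [r3 h hy.2 hz.2, r5 h hx.2 hz.2]
  simp only [map_sub, map_neg, map_smul, LinearMap.sub_apply, LinearMap.neg_apply,
    LinearMap.smul_apply]
  rw [r5 h hx.2 hyz.2]
  module

lemma a2 (h : ShortSL2 gr B E F H) {px py pz : ZMod 2} {x y z : G}
    (hx : IsJ gr H px x) (hy : IsJ gr H py y) (hz : IsJ gr H pz z) :
    B (B (F x) (F (F y))) z = -(((4:ℂ) * sg px py) • F (jmul B F y (jmul B F x z)))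
      - (2:ℂ) • B (F x) (F (jmul B F y z))
      - ((2:ℂ) * sg px py) • B (F y) (F (jmul B F x z))
      - B (F x) (B (F y) (F z)) := by
  have hyz := IsJ.mul h hy hz
  have hxz := IsJ.mul h hx hz
  rw [jac' h (h.evenF px x hx.1) (h.evenF py (F y) (h.evenF py y hy.1)) z]
  rw [r5 h hy.2 hz.2, r3 h hx.2 hz.2]
  simp only [map_sub, map_neg, map_smul, LinearMap.sub_apply, LinearMap.neg_apply,
    LinearMap.smul_apply]
  rw [r5 h hy.2 hxz.2]
  module

lemma a3 (h : ShortSL2 gr B E F H) {px py pz pw : ZMod 2} {x y z w : G}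
    (hx : IsJ gr H px x) (hy : IsJ gr H py y) (hz : IsJ gr H pz z) (hw : IsJ gr H pw w) :
    B (B (F x) (B (F y) (F z))) w = -((8:ℂ) • jmul B F x (jmul B F y (jmul B F z w)))
      + ((8:ℂ) * sg py pz) • jmul B F x (jmul B F z (jmul B F y w))
      + ((8:ℂ) * (sg px py * sg px pz)) • jmul B F y (jmul B F z (jmul B F x w))
      - ((8:ℂ) * (sg px py * sg px pz * sg py pz)) • jmul B F z (jmul B F y (jmul B F x w)) := by
    have hzw := IsJ.mul h hz hw
    have hyw := IsJ.mul h hy hw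
    have hxw := IsJ.mul h hx hw
    have hRgrade : B (F y) (F z) ∈ gr (py + pz) :=
      h.bracket_grade py pz (F y) (h.evenF py y hy.1) (F z) (h.evenF pz z hz.1)
    rw [jac' h (h.evenF px x hx.1) hRgrade w]
    rw [r6 h hy hz hw, r3 h hx.2 hw.2]
    simp only [map_sub, map_neg, map_smul, LinearMap.sub_apply, LinearMap.neg_apply,
      LinearMap.smul_apply]
    rw [r3 h hx.2 (IsJ.mul h hy hzw).2, r3 h hx.2 (IsJ.mul h hz hyw).2,
        r6 h hy hz (IsJ.mul h hx hw)]
    rw [sg_addr px py pz]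
    module

lemma master (h : ShortSL2 gr B E F H) {px py pz pw : ZMod 2} {x y z w : G}
    (hx : IsJ gr H px x) (hy : IsJ gr H py y) (hz : IsJ gr H pz z) (hw : IsJ gr H pw w) :
    (4:ℂ) • jmul B F (jmul B F (jmul B F x y) z) w
      - (4:ℂ) • jmul B F (jmul B F x y) (jmul B F z w)
      + ((4:ℂ) * (sg px pz * sg py pz)) • jmul B F z (jmul B F (jmul B F x y) w)
    = -((4:ℂ) • jmul B F (jmul B F x (jmul B F y z)) w)
      + ((8:ℂ) * sg px py) • jmul B F (jmul B F y (jmul B F x z)) w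
      - (4:ℂ) • jmul B F x (jmul B F (jmul B F y z) w)
      + ((4:ℂ) * (sg px py * sg px pz)) • jmul B F (jmul B F y z) (jmul B F x w)
      - ((4:ℂ) * sg px py) • jmul B F y (jmul B F (jmul B F x z) w)
      + ((4:ℂ) * sg py pz) • jmul B F (jmul B F x z) (jmul B F y w)
      - ((4:ℂ) * sg px py) • jmul B F y (jmul B F x (jmul B F z w))
      - ((4:ℂ) * (sg px py * sg px pz)) • jmul B F y (jmul B F z (jmul B F x w))
      - ((4:ℂ) * sg py pz) • jmul B F x (jmul B F z (jmul B F y w))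
      - ((4:ℂ) * (sg px pz * sg py pz)) • jmul B F z (jmul B F x (jmul B F y w))
      + (8:ℂ) • jmul B F x (jmul B F y (jmul B F z w))
      + ((8:ℂ) * (sg px py * sg px pz * sg py pz)) • jmul B F z (jmul B F y (jmul B F x w)) := by
  have hxy := IsJ.mul h hx hy
  have hyz := IsJ.mul h hy hz
  have hxz := IsJ.mul h hx hz
  have hzw := IsJ.mul h hz hw
  have hyw := IsJ.mul h hy hw
  have hxw := IsJ.mul h hx hw
  have e0 : B (B (F (F (jmul B F x y))) z) w
      = (4:ℂ) • jmul B F (jmul B F (jmul B F x y) z) w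
        - (4:ℂ) • jmul B F (jmul B F x y) (jmul B F z w)
        + ((4:ℂ) * sg (px+py) pz) • jmul B F z (jmul B F (jmul B F x y) w) :=
    w2 h hxy hz hw
  have e1 : B (B (F (F (jmul B F x y))) z) w
      = -((4:ℂ) • jmul B F (jmul B F x (jmul B F y z)) w)
      + ((8:ℂ) * sg px py) • jmul B F (jmul B F y (jmul B F x z)) w
      - (4:ℂ) • jmul B F x (jmul B F (jmul B F y z) w)
      + ((4:ℂ) * (sg px py * sg px pz)) • jmul B F (jmul B F y z) (jmul B F x w)
      - ((4:ℂ) * sg px py) • jmul B F y (jmul B F (jmul B F x z) w)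
      + ((4:ℂ) * sg py pz) • jmul B F (jmul B F x z) (jmul B F y w)
      - ((4:ℂ) * sg px py) • jmul B F y (jmul B F x (jmul B F z w))
      - ((4:ℂ) * (sg px py * sg px pz)) • jmul B F y (jmul B F z (jmul B F x w))
      - ((4:ℂ) * sg py pz) • jmul B F x (jmul B F z (jmul B F y w))
      - ((4:ℂ) * (sg px pz * sg py pz)) • jmul B F z (jmul B F x (jmul B F y w))
      + (8:ℂ) • jmul B F x (jmul B F y (jmul B F z w))
      + ((8:ℂ) * (sg px py * sg px pz * sg py pz)) • jmul B F z (jmul B F y (jmul B F x w)) := by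
    rw [f2m h hx.2 hy.2]
    simp only [map_add, map_smul, LinearMap.add_apply, LinearMap.smul_apply]
    rw [a1 h hx hy hz, a2 h hx hy hz]
    simp only [map_add, map_smul, map_neg, map_sub, LinearMap.add_apply, LinearMap.smul_apply,
      LinearMap.neg_apply, LinearMap.sub_apply]
    rw [r3 h (IsJ.mul h hx hyz).2 hw.2, r3 h (IsJ.mul h hy hxz).2 hw.2,
        r6 h hx hyz hw, r6 h hy hxz hw,
        a3 h hy hx hz hw, a3 h hx hy hz hw]
    rw [sg_comm py px]
    match_scalars
    all_goals try ring
    · rw [sg_addr px py pz]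
    · rw [sg_addr py px pz, sg_comm py px]
      linear_combination (4 * sg py pz) * sg_sq px py
    · linear_combination (4 * sg py pz) * sg_sq px py
    · linear_combination (-4 * sg py pz * sg px pz) * sg_sq px py
  rw [sg_addl px py pz] at e0
  rw [← e0, e1]

lemma jmul_smul_left (c : ℂ) (u v : G) : jmul B F (c • u) v = c • jmul B F u v := by
  unfold jmul
  rw [map_smul, LinearMap.smul_apply, smul_comm]

lemma jmul_smul_right (c : ℂ) (u v : G) : jmul B F u (c • v) = c • jmul B F u v := by
  unfold jmul
  rw [map_smul, map_smul, smul_comm]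

end Infra

lemma sg00 : sg (0:ZMod 2) 0 = 1 := by simp [sg]
lemma sg01 : sg (0:ZMod 2) 1 = 1 := by simp [sg]
lemma sg10 : sg (1:ZMod 2) 0 = 1 := by simp [sg]
lemma sg11 : sg (1:ZMod 2) 1 = -1 := by norm_num [sg, ZMod.val_one]

/-- If `g` is a short `sl₂`-Lie superalgebra, then `J = {a : H a = 2a}`
with the product `2 a·b = [a, f b]` is a Jordan superalgebra: the product is closed on
`J`, homogeneous of degree 0, supercommutative, and satisfies the 4-multilinear super
Jordan identity. -/
theorem shortSL2_gives_superJordan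
    {G : Type} [AddCommGroup G] [Module ℂ G]
    (gr : ZMod 2 → Submodule ℂ G)
    (B : G →ₗ[ℂ] G →ₗ[ℂ] G) (E F H : G →ₗ[ℂ] G)
    (h : ShortSL2 gr B E F H) :
    (∀ i j : ZMod 2, ∀ a ∈ gr i, ∀ b ∈ gr j,
        H a = (2 : ℂ) • a → H b = (2 : ℂ) • b →
        jmul B F a b ∈ gr (i + j) ∧ H (jmul B F a b) = (2 : ℂ) • jmul B F a b)
    ∧
    (∀ i j : ZMod 2, ∀ a ∈ gr i, ∀ b ∈ gr j,
        H a = (2 : ℂ) • a → H b = (2 : ℂ) • b →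
        jmul B F a b = sg i j • jmul B F b a)
    ∧
    (∀ pa pb pc pd : ZMod 2, ∀ a ∈ gr pa, ∀ b ∈ gr pb, ∀ c ∈ gr pc, ∀ d ∈ gr pd,
        H a = (2 : ℂ) • a → H b = (2 : ℂ) • b → H c = (2 : ℂ) • c → H d = (2 : ℂ) • d →
        jmul B F (jmul B F a b) (jmul B F c d)
          + sg pb pc • jmul B F (jmul B F a c) (jmul B F b d)
          + (sg pb pd * sg pc pd) • jmul B F (jmul B F a d) (jmul B F b c)
        = jmul B F (jmul B F (jmul B F a b) c) d
          + (sg pb pc * sg pb pd * sg pc pd) • jmul B F (jmul B F (jmul B F a d) c) b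
          + (sg pa pb * sg pa pc * sg pa pd * sg pc pd) •
              jmul B F (jmul B F (jmul B F b d) c) a) := by
  refine ⟨?_, ?_, ?_⟩
  · intro i j a ha b hb h2a h2b
    exact ⟨(IsJ.mul h ⟨ha, h2a⟩ ⟨hb, h2b⟩).1, (IsJ.mul h ⟨ha, h2a⟩ ⟨hb, h2b⟩).2⟩
  · intro i j a ha b hb h2a h2b
    exact jcomm h ⟨ha, h2a⟩ ⟨hb, h2b⟩
  · intro pa pb pc pd a ha b hb c hc d hd h2a h2b h2c h2d
    have hA : IsJ gr H pa a := ⟨ha, h2a⟩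
    have hB : IsJ gr H pb b := ⟨hb, h2b⟩
    have hC : IsJ gr H pc c := ⟨hc, h2c⟩
    have hD : IsJ gr H pd d := ⟨hd, h2d⟩
    have hba : jmul B F b a = (sg pa pb) • (jmul B F a b) := by
      rw [jcomm h hB hA]
      simp only [sg_addl, sg_addr, sg_comm pb pa, sg_comm pc pa, sg_comm pd pa,
        sg_comm pc pb, sg_comm pd pb, sg_comm pd pc]
      try module
    have hdb : jmul B F d b = (sg pb pd) • (jmul B F b d) := by
      rw [jcomm h hD hB]
      simp only [sg_addl, sg_addr, sg_comm pb pa, sg_comm pc pa, sg_comm pd pa,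
        sg_comm pc pb, sg_comm pd pb, sg_comm pd pc]
      try module
    have hdc : jmul B F d c = (sg pc pd) • (jmul B F c d) := by
      rw [jcomm h hD hC]
      simp only [sg_addl, sg_addr, sg_comm pb pa, sg_comm pc pa, sg_comm pd pa,
        sg_comm pc pb, sg_comm pd pb, sg_comm pd pc]
      try module
    have S1 : jmul B F (jmul B F b d) (jmul B F a c) = (sg pa pb * sg pa pd * sg pb pc * sg pc pd) • (jmul B F (jmul B F a c) (jmul B F b d)) := by
      rw [jcomm h (IsJ.mul h hB hD) (IsJ.mul h hA hC)]
      simp only [sg_addl, sg_addr, sg_comm pb pa, sg_comm pc pa, sg_comm pd pa,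
        sg_comm pc pb, sg_comm pd pb, sg_comm pd pc]
      try module
    have S2 : jmul B F (jmul B F b c) (jmul B F a d) = (sg pa pb * sg pa pc * sg pb pd * sg pc pd) • (jmul B F (jmul B F a d) (jmul B F b c)) := by
      rw [jcomm h (IsJ.mul h hB hC) (IsJ.mul h hA hD)]
      simp only [sg_addl, sg_addr, sg_comm pb pa, sg_comm pc pa, sg_comm pd pa,
        sg_comm pc pb, sg_comm pd pb, sg_comm pd pc]
      try module
    have S3 : jmul B F d (jmul B F (jmul B F a b) c) = (sg pa pd * sg pb pd * sg pc pd) • (jmul B F (jmul B F (jmul B F a b) c) d) := by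
      rw [jcomm h hD (IsJ.mul h (IsJ.mul h hA hB) hC)]
      simp only [sg_addl, sg_addr, sg_comm pb pa, sg_comm pc pa, sg_comm pd pa,
        sg_comm pc pb, sg_comm pd pb, sg_comm pd pc]
      try module
    have S4 : jmul B F (jmul B F a d) c = (sg pa pc * sg pc pd) • (jmul B F c (jmul B F a d)) := by
      rw [jcomm h (IsJ.mul h hA hD) hC]
      simp only [sg_addl, sg_addr, sg_comm pb pa, sg_comm pc pa, sg_comm pd pa,
        sg_comm pc pb, sg_comm pd pb, sg_comm pd pc]
      try module
    have S5 : jmul B F (jmul B F c (jmul B F a d)) b = (sg pa pb * sg pb pc * sg pb pd) • (jmul B F b (jmul B F c (jmul B F a d))) := by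
      rw [jcomm h (IsJ.mul h hC (IsJ.mul h hA hD)) hB]
      simp only [sg_addl, sg_addr, sg_comm pb pa, sg_comm pc pa, sg_comm pd pa,
        sg_comm pc pb, sg_comm pd pb, sg_comm pd pc]
      try module
    have S6 : jmul B F (jmul B F b d) c = (sg pb pc * sg pc pd) • (jmul B F c (jmul B F b d)) := by
      rw [jcomm h (IsJ.mul h hB hD) hC]
      simp only [sg_addl, sg_addr, sg_comm pb pa, sg_comm pc pa, sg_comm pd pa,
        sg_comm pc pb, sg_comm pd pb, sg_comm pd pc]
      try module
    have S7 : jmul B F (jmul B F c (jmul B F b d)) a = (sg pa pb * sg pa pc * sg pa pd) • (jmul B F a (jmul B F c (jmul B F b d))) := by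
      rw [jcomm h (IsJ.mul h hC (IsJ.mul h hB hD)) hA]
      simp only [sg_addl, sg_addr, sg_comm pb pa, sg_comm pc pa, sg_comm pd pa,
        sg_comm pc pb, sg_comm pd pb, sg_comm pd pc]
      try module
    have S8 : jmul B F d (jmul B F a b) = (sg pa pd * sg pb pd) • (jmul B F (jmul B F a b) d) := by
      rw [jcomm h hD (IsJ.mul h hA hB)]
      simp only [sg_addl, sg_addr, sg_comm pb pa, sg_comm pc pa, sg_comm pd pa,
        sg_comm pc pb, sg_comm pd pb, sg_comm pd pc]
      try module
    have S9 : jmul B F (jmul B F (jmul B F a b) d) c = (sg pa pc * sg pb pc * sg pc pd) • (jmul B F c (jmul B F (jmul B F a b) d)) := by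
      rw [jcomm h (IsJ.mul h (IsJ.mul h hA hB) hD) hC]
      simp only [sg_addl, sg_addr, sg_comm pb pa, sg_comm pc pa, sg_comm pd pa,
        sg_comm pc pb, sg_comm pd pb, sg_comm pd pc]
      try module
    have S10 : jmul B F d (jmul B F a (jmul B F b c)) = (sg pa pd * sg pb pd * sg pc pd) • (jmul B F (jmul B F a (jmul B F b c)) d) := by
      rw [jcomm h hD (IsJ.mul h hA (IsJ.mul h hB hC))]
      simp only [sg_addl, sg_addr, sg_comm pb pa, sg_comm pc pa, sg_comm pd pa,
        sg_comm pc pb, sg_comm pd pb, sg_comm pd pc]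
      try module
    have S11 : jmul B F d (jmul B F b (jmul B F a c)) = (sg pa pd * sg pb pd * sg pc pd) • (jmul B F (jmul B F b (jmul B F a c)) d) := by
      rw [jcomm h hD (IsJ.mul h hB (IsJ.mul h hA hC))]
      simp only [sg_addl, sg_addr, sg_comm pb pa, sg_comm pc pa, sg_comm pd pa,
        sg_comm pc pb, sg_comm pd pb, sg_comm pd pc]
      try module
    have S12 : jmul B F d (jmul B F b c) = (sg pb pd * sg pc pd) • (jmul B F (jmul B F b c) d) := by
      rw [jcomm h hD (IsJ.mul h hB hC)]
      simp only [sg_addl, sg_addr, sg_comm pb pa, sg_comm pc pa, sg_comm pd pa,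
        sg_comm pc pb, sg_comm pd pb, sg_comm pd pc]
      try module
    have S13 : jmul B F d (jmul B F a c) = (sg pa pd * sg pc pd) • (jmul B F (jmul B F a c) d) := by
      rw [jcomm h hD (IsJ.mul h hA hC)]
      simp only [sg_addl, sg_addr, sg_comm pb pa, sg_comm pc pa, sg_comm pd pa,
        sg_comm pc pb, sg_comm pd pb, sg_comm pd pc]
      try module
    have S14 : jmul B F (jmul B F a (jmul B F b d)) c = (sg pa pc * sg pb pc * sg pc pd) • (jmul B F c (jmul B F a (jmul B F b d))) := by
      rw [jcomm h (IsJ.mul h hA (IsJ.mul h hB hD)) hC]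
      simp only [sg_addl, sg_addr, sg_comm pb pa, sg_comm pc pa, sg_comm pd pa,
        sg_comm pc pb, sg_comm pd pb, sg_comm pd pc]
      try module
    have S15 : jmul B F (jmul B F a d) b = (sg pa pb * sg pb pd) • (jmul B F b (jmul B F a d)) := by
      rw [jcomm h (IsJ.mul h hA hD) hB]
      simp only [sg_addl, sg_addr, sg_comm pb pa, sg_comm pc pa, sg_comm pd pa,
        sg_comm pc pb, sg_comm pd pb, sg_comm pd pc]
      try module
    have S16 : jmul B F (jmul B F b (jmul B F a d)) c = (sg pa pc * sg pb pc * sg pc pd) • (jmul B F c (jmul B F b (jmul B F a d))) := by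
      rw [jcomm h (IsJ.mul h hB (IsJ.mul h hA hD)) hC]
      simp only [sg_addl, sg_addr, sg_comm pb pa, sg_comm pc pa, sg_comm pd pa,
        sg_comm pc pb, sg_comm pd pb, sg_comm pd pc]
      try module
    have c1 : jmul B F (jmul B F b a) (jmul B F c d) = (sg pa pb) • (jmul B F (jmul B F a b) (jmul B F c d)) := by
      rw [hba, jmul_smul_left]
      try module
    have c2 : jmul B F (jmul B F a b) (jmul B F d c) = (sg pc pd) • (jmul B F (jmul B F a b) (jmul B F c d)) := by
      rw [hdc, jmul_smul_right]
      try module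
    have c3 : jmul B F (jmul B F d b) (jmul B F a c) = (sg pa pb * sg pa pd * sg pb pc * sg pb pd * sg pc pd) • (jmul B F (jmul B F a c) (jmul B F b d)) := by
      rw [hdb, jmul_smul_left, S1, smul_smul]
      try module
    have c4 : jmul B F (jmul B F b c) (jmul B F a d) = (sg pa pb * sg pa pc * sg pb pd * sg pc pd) • (jmul B F (jmul B F a d) (jmul B F b c)) := by
      rw [S2]
      try module
    have c5 : jmul B F (jmul B F (jmul B F b a) c) d = (sg pa pb) • (jmul B F (jmul B F (jmul B F a b) c) d) := by
      rw [hba, jmul_smul_left, jmul_smul_left]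
      try module
    have c6 : jmul B F d (jmul B F (jmul B F a b) c) = (sg pa pd * sg pb pd * sg pc pd) • (jmul B F (jmul B F (jmul B F a b) c) d) := by
      rw [S3]
      try module
    have c7 : jmul B F (jmul B F (jmul B F a d) c) b = (sg pa pb * sg pa pc * sg pb pc * sg pb pd * sg pc pd) • (jmul B F b (jmul B F c (jmul B F a d))) := by
      rw [S4, jmul_smul_left, S5, smul_smul]
      try module
    have c8 : jmul B F b (jmul B F (jmul B F a d) c) = (sg pa pc * sg pc pd) • (jmul B F b (jmul B F c (jmul B F a d))) := by
      rw [S4, jmul_smul_right]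
      try module
    have c9 : jmul B F (jmul B F (jmul B F b d) c) a = (sg pa pb * sg pa pc * sg pa pd * sg pb pc * sg pc pd) • (jmul B F a (jmul B F c (jmul B F b d))) := by
      rw [S6, jmul_smul_left, S7, smul_smul]
      try module
    have c10 : jmul B F a (jmul B F (jmul B F d b) c) = (sg pb pc * sg pb pd * sg pc pd) • (jmul B F a (jmul B F c (jmul B F b d))) := by
      rw [hdb, jmul_smul_left, jmul_smul_right, S6, jmul_smul_right, smul_smul]
      try module
    have c11 : jmul B F c (jmul B F (jmul B F b a) d) = (sg pa pb) • (jmul B F c (jmul B F (jmul B F a b) d)) := by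
      rw [hba, jmul_smul_left, jmul_smul_right]
      try module
    have c12 : jmul B F (jmul B F d (jmul B F a b)) c = (sg pa pc * sg pa pd * sg pb pc * sg pb pd * sg pc pd) • (jmul B F c (jmul B F (jmul B F a b) d)) := by
      rw [S8, jmul_smul_left, S9, smul_smul]
      try module
    have c13 : jmul B F d (jmul B F a (jmul B F b c)) = (sg pa pd * sg pb pd * sg pc pd) • (jmul B F (jmul B F a (jmul B F b c)) d) := by
      rw [S10]
      try module
    have c14 : jmul B F d (jmul B F b (jmul B F a c)) = (sg pa pd * sg pb pd * sg pc pd) • (jmul B F (jmul B F b (jmul B F a c)) d) := by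
      rw [S11]
      try module
    have c15 : jmul B F a (jmul B F d (jmul B F b c)) = (sg pb pd * sg pc pd) • (jmul B F a (jmul B F (jmul B F b c) d)) := by
      rw [S12, jmul_smul_right]
      try module
    have c16 : jmul B F b (jmul B F d (jmul B F a c)) = (sg pa pd * sg pc pd) • (jmul B F b (jmul B F (jmul B F a c) d)) := by
      rw [S13, jmul_smul_right]
      try module
    have c17 : jmul B F b (jmul B F a (jmul B F d c)) = (sg pc pd) • (jmul B F b (jmul B F a (jmul B F c d))) := by
      rw [hdc, jmul_smul_right, jmul_smul_right]
      try module
    have c18 : jmul B F (jmul B F a (jmul B F d b)) c = (sg pa pc * sg pb pc * sg pb pd * sg pc pd) • (jmul B F c (jmul B F a (jmul B F b d))) := by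
      rw [hdb, jmul_smul_right, jmul_smul_left, S14, smul_smul]
      try module
    have c19 : jmul B F a (jmul B F b (jmul B F d c)) = (sg pc pd) • (jmul B F a (jmul B F b (jmul B F c d))) := by
      rw [hdc, jmul_smul_right, jmul_smul_right]
      try module
    have c20 : jmul B F (jmul B F (jmul B F a d) b) c = (sg pa pb * sg pa pc * sg pb pc * sg pb pd * sg pc pd) • (jmul B F c (jmul B F b (jmul B F a d))) := by
      rw [S15, jmul_smul_left, S16, smul_smul]
      try module

    have I1 := master h hA hB hC hD
    have I2 := master h hB hA hC hD
    have I3 := master h hA hD hB hC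
    rw [c4] at I1
    rw [c1, c4, c5, c11] at I2
    rw [c2, c3, c6, c8, c10, c12, c13, c14, c15, c16, c17, c18, c19, c20] at I3
    rw [c7, c9]
    have hcase : ∀ x : ZMod 2, x = 0 ∨ x = 1 := by decide
    rcases hcase pa with rfl|rfl <;> rcases hcase pb with rfl|rfl <;>
      rcases hcase pc with rfl|rfl <;> rcases hcase pd with rfl|rfl <;>
      simp only [sg00, sg01, sg10, sg11] at I1 I2 I3 ⊢ <;>
      first
        | linear_combination (norm := module)
            (-(1:ℂ)/12) • I1 + (-(1:ℂ)/12) • I2 + (-(1:ℂ)/12) • I3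
        | linear_combination (norm := module)
            (-(1:ℂ)/12) • I1 + (-(1:ℂ)/12) • I2 + ((1:ℂ)/12) • I3
        | linear_combination (norm := module)
            (-(1:ℂ)/12) • I1 + ((1:ℂ)/12) • I2 + (-(1:ℂ)/12) • I3
        | linear_combination (norm := module)
            (-(1:ℂ)/12) • I1 + ((1:ℂ)/12) • I2 + ((1:ℂ)/12) • I3
end

section
/- Let g be a short sl₂-Lie superalgebra with decomposition g = sl₂ ⊗ J ⊕ V ⊗ M ⊕ D, with operations a·b, a•m, m⋆n determined by the bracket as in the Tits construction. Then for all homogeneous a, b ∈ J and m ∈ M: (a·b)•m = ½(a•(b•m) + (−1)^{|a||b|} b•(a•m)); that is, M is a special Jordan supermodule over J. -/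
/-- If `x` is an `H`-eigenvector with eigenvalue `c` not in `{-2,-1,0,1,2}`, then `x = 0`. -/
lemma ShortSL2.eigen_zero {G : Type} [AddCommGroup G] [Module ℂ G]
    {gr : ZMod 2 → Submodule ℂ G} {B : G →ₗ[ℂ] G →ₗ[ℂ] G} {E F H : G →ₗ[ℂ] G}
    (h : ShortSL2 gr B E F H) {c : ℂ} {x : G} (hx : H x = c • x)
    (hc : (c - 2) * (c - 1) * c * (c + 1) * (c + 2) ≠ 0) : x = 0 := by
  obtain ⟨x2, x1, x0, y1, y2, h2, h1, h0, hm1, hm2, hsum⟩ := h.short x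
  set A : ℂ → (G →ₗ[ℂ] G) := fun d => H - d • LinearMap.id with hA
  have hAval : ∀ (d e : ℂ) (v : G), H v = e • v → A d v = (e - d) • v := by
    intro d e v hv
    simp [hA, hv, sub_smul]
  have hAeig : ∀ (d e : ℂ) (v : G), H v = e • v → H (A d v) = e • A d v := by
    intro d e v hv
    rw [hAval d e v hv, map_smul, hv, smul_smul, smul_smul, mul_comm]
  have chain : ∀ (e : ℂ) (v : G), H v = e • v →
      A 2 (A 1 (A 0 (A (-1) (A (-2) v)))) =
        ((e - 2) * (e - 1) * e * (e + 1) * (e + 2)) • v := by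
    intro e v e0
    have e1 := hAeig (-2) e v e0
    have e2 := hAeig (-1) e _ e1
    have e3 := hAeig 0 e _ e2
    have e4 := hAeig 1 e _ e3
    rw [hAval 2 e _ e4, hAval 1 e _ e3, hAval 0 e _ e2, hAval (-1) e _ e1,
      hAval (-2) e v e0, smul_smul, smul_smul, smul_smul, smul_smul]
    ring_nf
  have h0' : H x0 = (0 : ℂ) • x0 := by rw [h0, zero_smul]
  have h1' : H x1 = (1 : ℂ) • x1 := by rw [h1, one_smul]
  have z2 : A 2 (A 1 (A 0 (A (-1) (A (-2) x2)))) = 0 := by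
    rw [chain 2 x2 h2]; norm_num
  have z1 : A 2 (A 1 (A 0 (A (-1) (A (-2) x1)))) = 0 := by
    rw [chain 1 x1 h1']; norm_num
  have z0 : A 2 (A 1 (A 0 (A (-1) (A (-2) x0)))) = 0 := by
    rw [chain 0 x0 h0']; norm_num
  have zm1 : A 2 (A 1 (A 0 (A (-1) (A (-2) y1)))) = 0 := by
    rw [chain (-1) y1 hm1]; norm_num
  have zm2 : A 2 (A 1 (A 0 (A (-1) (A (-2) y2)))) = 0 := by
    rw [chain (-2) y2 hm2]; norm_num
  have hLx := chain c x hx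
  have : ((c - 2) * (c - 1) * c * (c + 1) * (c + 2)) • x = 0 := by
    rw [← hLx]
    conv_lhs => rw [hsum]
    simp only [map_add]
    rw [z2, z1, z0, zm1, zm2]
    abel
  rcases smul_eq_zero.mp this with h' | h'
  · exact absurd h' hc
  · exact h'

/-- In a short `sl₂`-Lie superalgebra, with `2 a·b = [a, f b]` on
`J = {a : H a = 2a}` and `a•m = [a, f m]` for `m ∈ M = {m : H m = m}`, one has
`(a·b)•m = ½(a•(b•m) + (−1)^{|a||b|} b•(a•m))`: `M` is a special Jordan supermodule. -/
theorem shortSL2_special_module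
    {G : Type} [AddCommGroup G] [Module ℂ G]
    (gr : ZMod 2 → Submodule ℂ G)
    (B : G →ₗ[ℂ] G →ₗ[ℂ] G) (E F H : G →ₗ[ℂ] G)
    (h : ShortSL2 gr B E F H) :
    ∀ pa pb pm : ZMod 2, ∀ a ∈ gr pa, ∀ b ∈ gr pb, ∀ m ∈ gr pm,
      H a = (2 : ℂ) • a → H b = (2 : ℂ) • b → H m = m →
      B ((2 : ℂ)⁻¹ • B a (F b)) (F m)
        = (2 : ℂ)⁻¹ •
            (B a (F (B b (F m))) + sg pa pb • B b (F (B a (F m)))) := by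
  intro pa pb pm a ha b hb m hm hHa hHb hHm
  -- F lowers the H-eigenvalue by 2
  have hHF : ∀ v : G, H (F v) = F (H v) - (2 : ℂ) • F v := by
    intro v
    have hv := LinearMap.ext_iff.mp h.rel_HF v
    simp only [LinearMap.sub_apply, LinearMap.comp_apply, LinearMap.neg_apply,
      LinearMap.smul_apply] at hv
    rw [two_nsmul] at hv
    rw [sub_eq_iff_eq_add] at hv
    rw [hv, two_smul]
    abel
  have hFm : H (F m) = (-1 : ℂ) • F m := by
    rw [hHF, hHm]; module
  have hFFm0 : F (F m) = 0 := by
    refine h.eigen_zero (c := -3) ?_ (by norm_num)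
    rw [hHF, hFm, map_smul]; module
  have haFm : H (B a (F m)) = (1 : ℂ) • B a (F m) := by
    rw [h.derH, hHa, hFm, map_smul, map_smul, LinearMap.smul_apply]; module
  have hb3 : B b (B a (F m)) = 0 := by
    refine h.eigen_zero (c := 3) ?_ (by norm_num)
    rw [h.derH, hHb, haFm, map_smul, map_smul, LinearMap.smul_apply]; module
  have key : B (F b) (B a (F m)) = - B b (B (F a) (F m)) := by
    have h0 : (0 : G) = B (F b) (B a (F m)) + B b (B (F a) (F m)) := by
      have := h.derF b (B a (F m))
      rw [hb3, map_zero] at this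
      rw [h.derF a (F m), hFFm0, map_zero, add_zero] at this
      exact this
    exact eq_neg_of_add_eq_zero_left h0.symm
  have hFbFm : F (B b (F m)) = B (F b) (F m) := by
    rw [h.derF, hFFm0, map_zero, add_zero]
  have hFaFm : F (B a (F m)) = B (F a) (F m) := by
    rw [h.derF, hFFm0, map_zero, add_zero]
  have jac := h.jacobi pa pb a ha (F b) (h.evenF pb b hb) (F m)
  rw [hFbFm, hFaFm, jac, key, map_smul, LinearMap.smul_apply]
  module
end

section
/- Let g be a short sl₂-Lie superalgebra with operations ·, •, ⋆ determined by the Lie bracket. Then for all homogeneous a ∈ J and m, n ∈ M: a·(m⋆n) = ½((a•m)⋆n + (−1)^{|a||m|} m⋆(a•n)). -/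
/-- In a short `sl₂`-Lie superalgebra, with `2 a·b = [a, f b]`,
`a•m = [a, f m]`, `m⋆n = [m,n]`, one has
`a·(m⋆n) = ½((a•m)⋆n + (−1)^{|a||m|} m⋆(a•n))`. -/
theorem shortSL2_compat_star
    {G : Type} [AddCommGroup G] [Module ℂ G]
    (gr : ZMod 2 → Submodule ℂ G)
    (B : G →ₗ[ℂ] G →ₗ[ℂ] G) (E F H : G →ₗ[ℂ] G)
    (h : ShortSL2 gr B E F H) :
    ∀ pa pm pn : ZMod 2, ∀ a ∈ gr pa, ∀ m ∈ gr pm, ∀ n ∈ gr pn,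
      H a = (2 : ℂ) • a → H m = m → H n = n →
      (2 : ℂ)⁻¹ • B a (F (B m n))
        = (2 : ℂ)⁻¹ • (B (B a (F m)) n + sg pa pm • B m (B a (F n))) := by
  -- Auxiliary: any H-eigenvector of eigenvalue 3 is zero.
  have weight3 : ∀ x : G, H x = (3 : ℂ) • x → x = 0 := by
    intro x hx
    obtain ⟨x2, x1, x0, y1, y2, h2, h1, h0, hm1, hm2, hsum⟩ := h.short x
    have hHx : H x = (2 : ℂ) • x2 + x1 + (-1 : ℂ) • y1 + (-2 : ℂ) • y2 := by
      rw [hsum, map_add, map_add, map_add, map_add, h2, h1, h0, hm1, hm2]; module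
    -- w1 = (H + 2) x
    set w1 : G := H x + (2 : ℂ) • x with hw1
    have hw1x : w1 = (5 : ℂ) • x := by rw [hw1, hx]; module
    have hw1c : w1 = (4 : ℂ) • x2 + (3 : ℂ) • x1 + (2 : ℂ) • x0 + y1 := by
      rw [hw1, hHx, hsum]; module
    -- w2 = (H + 1) w1
    set w2 : G := H w1 + w1 with hw2
    have hw2x : w2 = (20 : ℂ) • x := by
      rw [hw2, hw1x, map_smul, hx]; module
    have hw2c : w2 = (12 : ℂ) • x2 + (6 : ℂ) • x1 + (2 : ℂ) • x0 := by
      rw [hw2]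
      nth_rewrite 1 [hw1c]
      rw [map_add, map_add, map_add, map_smul, map_smul, map_smul,
        h2, h1, h0, hm1, hw1c]
      module
    -- w3 = H w2
    set w3 : G := H w2 with hw3
    have hw3x : w3 = (60 : ℂ) • x := by rw [hw3, hw2x, map_smul, hx]; module
    have hw3c : w3 = (24 : ℂ) • x2 + (6 : ℂ) • x1 := by
      rw [hw3, hw2c, map_add, map_add, map_smul, map_smul, map_smul, h2, h1, h0]
      module
    -- w4 = (H - 1) w3
    set w4 : G := H w3 - w3 with hw4
    have hw4x : w4 = (120 : ℂ) • x := by rw [hw4, hw3x, map_smul, hx]; module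
    have hw4c : w4 = (24 : ℂ) • x2 := by
      rw [hw4]
      nth_rewrite 1 [hw3c]
      rw [map_add, map_smul, map_smul, h2, h1, hw3c]
      module
    -- w5 = (H - 2) w4
    have hw5 : H w4 - (2 : ℂ) • w4 = 0 := by
      rw [hw4c, map_smul, h2]; module
    rw [hw4x, map_smul, hx] at hw5
    have hx0 : ((120 : ℂ) * 3 - 2 * 120) • x = 0 := by
      rw [sub_smul, mul_smul, mul_smul]; exact hw5
    norm_num at hx0
    exact hx0
  intro pa pm pn a ha m hm n hn hHa hHm hHn
  -- B a m and B a n have weight 3, hence vanish.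
  have ham : B a m = 0 := by
    apply weight3
    rw [h.derH a m, hHa, hHm, map_smul, LinearMap.smul_apply]
    module
  have han : B a n = 0 := by
    apply weight3
    rw [h.derH a n, hHa, hHn, map_smul, LinearMap.smul_apply]
    module
  have hFm : F m ∈ gr pm := h.evenF pm m hm
  have jac1 := h.jacobi pa pm a ha (F m) hFm n
  have jac2 := h.jacobi pa pm a ha m hm (F n)
  rw [h.derF m n, map_add, jac1, jac2, ham, han, map_zero, smul_zero,
    LinearMap.map_zero, LinearMap.zero_apply]
  module
end

section
/- Let (J, M) be a J-ternary superalgebra with ∂_{m,n} defined on M by ∂_{m,n}(r) = ½(m⋆n)•r − (m,n,r). Then ∂_{m,n} is a superderivation of the action •: ∂_{m,n}(a•r) = ∂_{m,n}(a)•r + (−1)^{|a|(|m|+|n|)} a•∂_{m,n}(r) for all homogeneous a ∈ J, r ∈ M, where 2∂_{m,n}(a) = (−1)^{|a|(|m|+|n|)}(a•m)⋆n − (−1)^{|a||n|}m⋆(a•n). -/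
lemma sg_add_right (i j k : ZMod 2) : sg i (j + k) = sg i j * sg i k := by
  unfold sg
  rw [← pow_add, ← Nat.mul_add, ZMod.val_add]
  rw [neg_one_pow_eq_pow_mod_two, neg_one_pow_eq_pow_mod_two (n := i.val * (j.val + k.val))]
  congr 1
  exact Nat.ModEq.mul_left i.val (Nat.mod_modEq _ 2)

lemma sg_add_left (i j k : ZMod 2) : sg (i + j) k = sg i k * sg j k := by
  rw [sg_comm, sg_add_right, sg_comm k i, sg_comm k j]

structure JTern {J M : Type} [AddCommGroup J] [Module ℂ J] [AddCommGroup M] [Module ℂ M]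
    (grJ : ZMod 2 → Submodule ℂ J) (grM : ZMod 2 → Submodule ℂ M)
    (cd : J →ₗ[ℂ] J →ₗ[ℂ] J) (bu : J →ₗ[ℂ] M →ₗ[ℂ] M)
    (st : M →ₗ[ℂ] M →ₗ[ℂ] J) (tp : M →ₗ[ℂ] M →ₗ[ℂ] M →ₗ[ℂ] M) : Prop where
  grade_cd : ∀ p q : ZMod 2, ∀ a ∈ grJ p, ∀ b ∈ grJ q, cd a b ∈ grJ (p + q)
  grade_bu : ∀ p q : ZMod 2, ∀ a ∈ grJ p, ∀ m ∈ grM q, bu a m ∈ grM (p + q)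
  grade_st : ∀ p q : ZMod 2, ∀ m ∈ grM p, ∀ n ∈ grM q, st m n ∈ grJ (p + q)
  grade_tp : ∀ p q r : ZMod 2, ∀ m ∈ grM p, ∀ n ∈ grM q, ∀ s ∈ grM r,
      tp m n s ∈ grM (p + q + r)
  comm : ∀ p q : ZMod 2, ∀ a ∈ grJ p, ∀ b ∈ grJ q, cd a b = sg p q • cd b a
  jordan : ∀ p q r s : ZMod 2, ∀ a ∈ grJ p, ∀ b ∈ grJ q, ∀ c ∈ grJ r, ∀ d ∈ grJ s,
      cd (cd a b) (cd c d) + sg q r • cd (cd a c) (cd b d)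
        + (sg q s * sg r s) • cd (cd a d) (cd b c)
      = cd (cd (cd a b) c) d + (sg q r * sg q s * sg r s) • cd (cd (cd a d) c) b
        + (sg p q * sg p r * sg p s * sg r s) • cd (cd (cd b d) c) a
  special : ∀ p q : ZMod 2, ∀ a ∈ grJ p, ∀ b ∈ grJ q, ∀ m : M,
      bu (cd a b) m = (2 : ℂ)⁻¹ • (bu a (bu b m) + sg p q • bu b (bu a m))
  st_anti : ∀ p q : ZMod 2, ∀ m ∈ grM p, ∀ n ∈ grM q, st m n = -(sg p q • st n m)
  sjt1 : ∀ p q r : ZMod 2, ∀ a ∈ grJ p, ∀ m ∈ grM q, ∀ n ∈ grM r,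
      cd a (st m n) = (2 : ℂ)⁻¹ • (st (bu a m) n + sg p q • st m (bu a n))
  sjt2 : ∀ p q r s : ZMod 2, ∀ a ∈ grJ p, ∀ m ∈ grM q, ∀ n ∈ grM r, ∀ t ∈ grM s,
      bu a (tp m n t) = tp (bu a m) n t - sg p q • tp m (bu a n) t
        + sg p (q + r) • tp m n (bu a t)
  sjt3 : ∀ p q r : ZMod 2, ∀ m ∈ grM p, ∀ n ∈ grM q, ∀ t ∈ grM r,
      tp m n t = (sg p (q + r) * sg q r) • tp t n m - sg q r • bu (st m t) n
  sjt4 : ∀ p q r : ZMod 2, ∀ m ∈ grM p, ∀ n ∈ grM q, ∀ t ∈ grM r,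
      tp m n t = sg p q • tp n m t + bu (st m n) t
  sjt5 : ∀ p q r s : ZMod 2, ∀ m ∈ grM p, ∀ n ∈ grM q, ∀ u ∈ grM r, ∀ t ∈ grM s,
      st (tp m n u) t + sg r (p + q) • st u (tp m n t)
        = sg q (r + s) • st m (bu (st u t) n)
  sjt6 : ∀ p q r s w : ZMod 2,
      ∀ m ∈ grM p, ∀ n ∈ grM q, ∀ u ∈ grM r, ∀ t ∈ grM s, ∀ v ∈ grM w,
      tp m n (tp u t v) = tp (tp m n u) t v
        + (sg r (p + q) * sg p q) • tp u (tp n m t) v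
        + sg (p + q) (r + s) • tp u t (tp m n v)

/-- In a `J`-ternary superalgebra, `∂_{m,n}` is a superderivation of the
action `•` : `∂_{m,n}(a•r) = ∂_{m,n}(a)•r + (−1)^{|a|(|m|+|n|)} a•∂_{m,n}(r)`, where
`2∂_{m,n}(a) = (−1)^{|a|(|m|+|n|)}(a•m)⋆n − (−1)^{|a||n|}m⋆(a•n)` on `J` and
`∂_{m,n}(r) = ½(m⋆n)•r − (m,n,r)` on `M`. -/
theorem jtern_partial_derives_bullet
    {J M : Type} [AddCommGroup J] [Module ℂ J] [AddCommGroup M] [Module ℂ M]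
    (grJ : ZMod 2 → Submodule ℂ J) (grM : ZMod 2 → Submodule ℂ M)
    (cd : J →ₗ[ℂ] J →ₗ[ℂ] J) (bu : J →ₗ[ℂ] M →ₗ[ℂ] M)
    (st : M →ₗ[ℂ] M →ₗ[ℂ] J) (tp : M →ₗ[ℂ] M →ₗ[ℂ] M →ₗ[ℂ] M)
    (h : JTern grJ grM cd bu st tp) :
    ∀ p q r s : ZMod 2, ∀ a ∈ grJ p, ∀ m ∈ grM q, ∀ n ∈ grM r, ∀ t ∈ grM s,
      (2 : ℂ)⁻¹ • bu (st m n) (bu a t) - tp m n (bu a t)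
        = bu ((2 : ℂ)⁻¹ •
              (sg p (q + r) • st (bu a m) n - sg p r • st m (bu a n))) t
          + sg p (q + r) • bu a ((2 : ℂ)⁻¹ • bu (st m n) t - tp m n t) := by
  intro p q r s a ha m hm n hn t ht
  have ham : bu a m ∈ grM (p + q) := h.grade_bu p q a ha m hm
  have han : bu a n ∈ grM (p + r) := h.grade_bu p r a ha n hn
  have hat : bu a t ∈ grM (p + s) := h.grade_bu p s a ha t ht
  have h1 := h.sjt2 p q r s a ha m hm n hn t ht
  have h2 := h.sjt2 p r q s a ha n hn m hm t ht
  have h3 := h.sjt4 q r (p + s) m hm n hn (bu a t) hat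
  have h5 := h.sjt4 q (p + r) s m hm (bu a n) han t ht
  have h6 := h.sjt4 (p + q) r s (bu a m) ham n hn t ht
  have h9 := congrArg (bu a) (h.sjt4 q r s m hm n hn t ht)
  simp only [map_add, map_smul] at h9
  rw [sg_add_right] at h1 h2
  rw [sg_add_right, sg_comm q p] at h5
  rw [sg_add_left] at h6
  have t12 : (sg p q * sg p r) * (sg p q * sg p r) = 1 := by
    have e1 := sg_sq p q; have e2 := sg_sq p r; ring_nf; ring_nf at e1 e2
    calc sg p q ^ 2 * sg p r ^ 2 = (sg p q * sg p q) * (sg p r * sg p r) := by ring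
    _ = 1 := by rw [sg_sq, sg_sq]; ring
  have w1 : (sg p q * sg p r) • ((sg p q * sg p r) • tp m n (bu a t)) = tp m n (bu a t) := by
    rw [smul_smul, t12, one_smul]
  have w2 : sg p q • (sg p q • tp m (bu a n) t) = tp m (bu a n) t := by
    rw [smul_smul, sg_sq, one_smul]
  have w3 : (sg p q * sg p r) • ((sg p q * sg p r) • tp n m (bu a t)) = tp n m (bu a t) := by
    rw [smul_smul, t12, one_smul]
  rw [sg_add_right]
  simp only [map_sub, map_smul, LinearMap.sub_apply, LinearMap.smul_apply]
  linear_combination (norm := module)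
    ((2:ℂ)⁻¹ * (sg p q * sg p r)) • h1
    + ((2:ℂ)⁻¹ * (sg p q * sg p r * sg q r)) • h2
    - (2:ℂ)⁻¹ • h3
    - ((2:ℂ)⁻¹ * sg p r) • h5
    + ((2:ℂ)⁻¹ * (sg p q * sg p r)) • h6
    + ((2:ℂ)⁻¹ * (sg p q * sg p r)) • h9
    + (2:ℂ)⁻¹ • w1
    - ((2:ℂ)⁻¹ * sg p r) • w2
    + ((2:ℂ)⁻¹ * sg q r) • w3
end

section
/- Let J be a (non-super, purely even) Jordan algebra over a field of characteristic 0, let R(J) ⊆ J⊗J be the span of elements a⊗b + b⊗a and (a·b)⊗c + (b·c)⊗a + (c·a)⊗b for a,b,c ∈ J, and let B(J) = (J⊗J)/R(J). Then for all a,b,c,d ∈ J: ⟨a,b⟩(c)⊗d + c⊗⟨a,b⟩(d) + ⟨c,d⟩(a)⊗b + a⊗⟨c,d⟩(b) ∈ R(J), where ⟨a,b⟩(x) = a·(b·x) − b·(a·x). -/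
open TensorProduct

/-- For a (purely even) Jordan algebra `J` over a characteristic-zero
field, with `R(J) ⊆ J⊗J` spanned by `a⊗b + b⊗a` and `(a·b)⊗c + (b·c)⊗a + (c·a)⊗b`,
the element `⟨a,b⟩(c)⊗d + c⊗⟨a,b⟩(d) + ⟨c,d⟩(a)⊗b + a⊗⟨c,d⟩(b)` lies in `R(J)`,
where `⟨a,b⟩(x) = a·(b·x) − b·(a·x)`. -/
theorem inner_action_in_relations
    {J : Type} [AddCommGroup J] [Module ℂ J]
    (mul : J →ₗ[ℂ] J →ₗ[ℂ] J)
    (hcomm : ∀ a b : J, mul a b = mul b a)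
    (hjordan : ∀ a b : J, mul (mul (mul a a) b) a = mul (mul a a) (mul b a)) :
    ∀ a b c d : J,
      (mul a (mul b c) - mul b (mul a c)) ⊗ₜ[ℂ] d
        + c ⊗ₜ[ℂ] (mul a (mul b d) - mul b (mul a d))
        + (mul c (mul d a) - mul d (mul c a)) ⊗ₜ[ℂ] b
        + a ⊗ₜ[ℂ] (mul c (mul d b) - mul d (mul c b))
      ∈ Submodule.span ℂ
          ({x : J ⊗[ℂ] J | ∃ u v : J, x = u ⊗ₜ[ℂ] v + v ⊗ₜ[ℂ] u} ∪
           {x : J ⊗[ℂ] J | ∃ u v w : J,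
              x = (mul u v) ⊗ₜ[ℂ] w + (mul v w) ⊗ₜ[ℂ] u + (mul w u) ⊗ₜ[ℂ] v}) := by
  intro a b c d
  set Sset := ({x : J ⊗[ℂ] J | ∃ u v : J, x = u ⊗ₜ[ℂ] v + v ⊗ₜ[ℂ] u} ∪
           {x : J ⊗[ℂ] J | ∃ u v w : J,
              x = (mul u v) ⊗ₜ[ℂ] w + (mul v w) ⊗ₜ[ℂ] u + (mul w u) ⊗ₜ[ℂ] v}) with hS
  have memS : ∀ u v : J, u ⊗ₜ[ℂ] v + v ⊗ₜ[ℂ] u ∈ Submodule.span ℂ Sset := fun u v =>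
    Submodule.subset_span (Or.inl ⟨u, v, rfl⟩)
  have memT : ∀ u v w : J,
      (mul u v) ⊗ₜ[ℂ] w + (mul v w) ⊗ₜ[ℂ] u + (mul w u) ⊗ₜ[ℂ] v ∈ Submodule.span ℂ Sset :=
    fun u v w => Submodule.subset_span (Or.inr ⟨u, v, w, rfl⟩)
  have key :
      (mul a (mul b c) - mul b (mul a c)) ⊗ₜ[ℂ] d
        + c ⊗ₜ[ℂ] (mul a (mul b d) - mul b (mul a d))
        + (mul c (mul d a) - mul d (mul c a)) ⊗ₜ[ℂ] b
        + a ⊗ₜ[ℂ] (mul c (mul d b) - mul d (mul c b))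
      =
      -((mul (mul a d) b) ⊗ₜ[ℂ] c + c ⊗ₜ[ℂ] (mul (mul a d) b))
      - ((mul (mul b c) d) ⊗ₜ[ℂ] a + a ⊗ₜ[ℂ] (mul (mul b c) d))
      + ((mul (mul b d) a) ⊗ₜ[ℂ] c + c ⊗ₜ[ℂ] (mul (mul b d) a))
      + ((mul (mul b d) c) ⊗ₜ[ℂ] a + a ⊗ₜ[ℂ] (mul (mul b d) c))
      + ((mul a c) ⊗ₜ[ℂ] (mul b d) + (mul b d) ⊗ₜ[ℂ] (mul a c))
      - ((mul a d) ⊗ₜ[ℂ] (mul b c) + (mul b c) ⊗ₜ[ℂ] (mul a d))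
      - ((mul a c) ⊗ₜ[ℂ] (mul b d) + (mul c (mul b d)) ⊗ₜ[ℂ] a
          + (mul (mul b d) a) ⊗ₜ[ℂ] c)
      + ((mul a d) ⊗ₜ[ℂ] (mul b c) + (mul d (mul b c)) ⊗ₜ[ℂ] a
          + (mul (mul b c) a) ⊗ₜ[ℂ] d)
      + ((mul b c) ⊗ₜ[ℂ] (mul a d) + (mul c (mul a d)) ⊗ₜ[ℂ] b
          + (mul (mul a d) b) ⊗ₜ[ℂ] c)
      - ((mul b d) ⊗ₜ[ℂ] (mul a c) + (mul d (mul a c)) ⊗ₜ[ℂ] b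
          + (mul (mul a c) b) ⊗ₜ[ℂ] d) := by
    simp only [TensorProduct.sub_tmul, TensorProduct.tmul_sub]
    simp only [hcomm]
    abel
  rw [key]
  exact sub_mem (add_mem (add_mem (sub_mem (sub_mem (add_mem (add_mem (add_mem
    (sub_mem (neg_mem (memS (mul (mul a d) b) c)) (memS (mul (mul b c) d) a))
    (memS (mul (mul b d) a) c)) (memS (mul (mul b d) c) a))
    (memS (mul a c) (mul b d))) (memS (mul a d) (mul b c)))
    (memT a c (mul b d))) (memT a d (mul b c)))
    (memT b c (mul a d))) (memT b d (mul a c))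
end
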